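/- Suppose E[Δ | F] = 1/W a.s. with W > 0 F-measurable, and X is an F-measurable random vector in ℝ^d with E[W Δ X X^T] = E[X X^T] invertible. If Y = β^T X + ε with E[ε X W Δ] = 0, then β is the unique minimizer over b ∈ ℝ^d of E[W Δ (Y − b^T X)^2]. -/

import Mathlib

open MeasureTheory Matrix

/-- Identification of regression coefficients via weighted least squares:
under `E[Δ|F] = 1/W`, positive definiteness of `E[W Δ X Xᵀ]`, and the
orthogonality `E[W Δ X ε] = 0`, the true coefficient `β` is the unique
minimizer of `b ↦ E[W Δ (Y − bᵀX)²]`. -/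
theorem weighted_least_squares_identification
    {Ω : Type*} {𝒜 : MeasurableSpace Ω} {P : Measure Ω} [IsProbabilityMeasure P]
    {F : MeasurableSpace Ω} (hF : F ≤ 𝒜) {d : ℕ}
    (X : Ω → Fin d → ℝ) (W Δ ε : Ω → ℝ) (β : Fin d → ℝ)
    (hXmeas : StronglyMeasurable[F] X)
    (hWmeas : StronglyMeasurable[F] W)
    (hWpos : ∀ ω, 0 < W ω) (hΔnonneg : ∀ ω, 0 ≤ Δ ω)
    (hcond : P[Δ | F] =ᵐ[P] fun ω => (W ω)⁻¹)
    (Y : Ω → ℝ)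
    (hY : ∀ ω, Y ω = (β ⬝ᵥ X ω) + ε ω)
    (hGram : Matrix.PosDef (Matrix.of fun k l => ∫ ω, W ω * Δ ω * X ω k * X ω l ∂P))
    (hOrth : ∀ k, ∫ ω, W ω * Δ ω * X ω k * ε ω ∂P = 0)
    (hint : ∀ b : Fin d → ℝ, Integrable (fun ω => W ω * Δ ω * (Y ω - b ⬝ᵥ X ω) ^ 2) P) :
    ∀ b : Fin d → ℝ, b ≠ β →
      (∫ ω, W ω * Δ ω * (Y ω - β ⬝ᵥ X ω) ^ 2 ∂P)
        < ∫ ω, W ω * Δ ω * (Y ω - b ⬝ᵥ X ω) ^ 2 ∂P := by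
  -- pointwise residual identities
  have hres : ∀ (u : Fin d → ℝ) ω, Y ω - (β - u) ⬝ᵥ X ω = ε ω + u ⬝ᵥ X ω := by
    intro u ω; rw [hY ω, sub_dotProduct]; ring
  have hres' : ∀ (u : Fin d → ℝ) ω, Y ω - (β + u) ⬝ᵥ X ω = ε ω - u ⬝ᵥ X ω := by
    intro u ω; rw [hY ω, add_dotProduct]; ring
  have hres0 : ∀ ω, Y ω - β ⬝ᵥ X ω = ε ω := by
    intro ω; rw [hY ω]; ring
  -- integrability of the quadratic part
  have hq_int : ∀ u : Fin d → ℝ,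
      Integrable (fun ω => W ω * Δ ω * (u ⬝ᵥ X ω) ^ 2) P := by
    intro u
    have heq : (fun ω => W ω * Δ ω * (u ⬝ᵥ X ω) ^ 2)
        = fun ω => (1/2 : ℝ) * ((W ω * Δ ω * (Y ω - (β - u) ⬝ᵥ X ω) ^ 2
            + W ω * Δ ω * (Y ω - (β + u) ⬝ᵥ X ω) ^ 2)
            - 2 * (W ω * Δ ω * (Y ω - β ⬝ᵥ X ω) ^ 2)) := by
      funext ω; rw [hres u ω, hres' u ω, hres0 ω]; ring
    rw [heq]
    exact ((((hint (β - u)).add (hint (β + u))).sub ((hint β).const_mul 2)).const_mul _)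
  -- integrability of the cross part
  have hc_int : ∀ u : Fin d → ℝ,
      Integrable (fun ω => W ω * Δ ω * (ε ω * (u ⬝ᵥ X ω))) P := by
    intro u
    have heq : (fun ω => W ω * Δ ω * (ε ω * (u ⬝ᵥ X ω)))
        = fun ω => (1/2 : ℝ) * ((W ω * Δ ω * (Y ω - (β - u) ⬝ᵥ X ω) ^ 2
            - W ω * Δ ω * (Y ω - β ⬝ᵥ X ω) ^ 2)
            - W ω * Δ ω * (u ⬝ᵥ X ω) ^ 2) := by
      funext ω; rw [hres u ω, hres0 ω]; ring
    rw [heq]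
    exact ((((hint (β - u)).sub (hint β)).sub (hq_int u)).const_mul _)
  have hsingle : ∀ (k : Fin d) ω, (Pi.single k 1 : Fin d → ℝ) ⬝ᵥ X ω = X ω k := by
    intro k ω
    simp [dotProduct, Pi.single_apply]
  -- entrywise integrability of W Δ X k X l
  have hXX_int : ∀ k l : Fin d,
      Integrable (fun ω => W ω * Δ ω * (X ω k * X ω l)) P := by
    intro k l
    have heq : (fun ω => W ω * Δ ω * (X ω k * X ω l))
        = fun ω => (1/2 : ℝ) * ((W ω * Δ ω * ((Pi.single k 1 + Pi.single l 1 : Fin d → ℝ) ⬝ᵥ X ω) ^ 2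
            - W ω * Δ ω * ((Pi.single k 1 : Fin d → ℝ) ⬝ᵥ X ω) ^ 2)
            - W ω * Δ ω * ((Pi.single l 1 : Fin d → ℝ) ⬝ᵥ X ω) ^ 2) := by
      funext ω
      rw [add_dotProduct, hsingle k ω, hsingle l ω]; ring
    rw [heq]
    exact ((((hq_int _).sub (hq_int _)).sub (hq_int _)).const_mul _)
  have hεX_int : ∀ k : Fin d,
      Integrable (fun ω => W ω * Δ ω * (ε ω * X ω k)) P := by
    intro k
    have := hc_int (Pi.single k 1)
    simpa [hsingle k] using this
  intro b hb
  set v : Fin d → ℝ := β - b with hvdef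
  have hv0 : v ≠ 0 := sub_ne_zero.mpr (Ne.symm hb)
  have hbeq : β - v = b := by simp [hvdef]
  -- cross integral vanishes
  have hεXzero : ∀ k : Fin d, ∫ ω, W ω * Δ ω * (ε ω * X ω k) ∂P = 0 := by
    intro k
    rw [show (fun ω => W ω * Δ ω * (ε ω * X ω k))
        = fun ω => W ω * Δ ω * X ω k * ε ω from funext fun ω => by ring]
    exact hOrth k
  have hcross : ∫ ω, W ω * Δ ω * (ε ω * (v ⬝ᵥ X ω)) ∂P = 0 := by
    have heq : (fun ω => W ω * Δ ω * (ε ω * (v ⬝ᵥ X ω)))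
        = fun ω => ∑ k, v k * (W ω * Δ ω * (ε ω * X ω k)) := by
      funext ω
      simp only [dotProduct, Finset.mul_sum]
      exact Finset.sum_congr rfl fun k _ => by ring
    rw [heq, integral_finset_sum _ (fun k _ => (hεX_int k).const_mul (v k))]
    simp only [integral_const_mul, hεXzero, mul_zero, Finset.sum_const_zero]
  -- quadratic integral is the Gram form
  have hquad : ∫ ω, W ω * Δ ω * (v ⬝ᵥ X ω) ^ 2 ∂P
      = ∑ k, ∑ l, v k * v l * ∫ ω, W ω * Δ ω * X ω k * X ω l ∂P := by
    have heq : (fun ω => W ω * Δ ω * (v ⬝ᵥ X ω) ^ 2)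
        = fun ω => ∑ k, ∑ l, (v k * v l) * (W ω * Δ ω * (X ω k * X ω l)) := by
      funext ω
      rw [show (v ⬝ᵥ X ω) ^ 2 = ∑ k, ∑ l, (v k * X ω k) * (v l * X ω l) by
        rw [sq, dotProduct, Finset.sum_mul_sum], Finset.mul_sum]
      refine Finset.sum_congr rfl fun k _ => ?_
      rw [Finset.mul_sum]
      exact Finset.sum_congr rfl fun l _ => by ring
    rw [heq, integral_finset_sum _ (fun k _ =>
      integrable_finset_sum _ (fun l _ => (hXX_int k l).const_mul _))]
    refine Finset.sum_congr rfl fun k _ => ?_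
    rw [integral_finset_sum _ (fun l _ => (hXX_int k l).const_mul _)]
    refine Finset.sum_congr rfl fun l _ => ?_
    rw [integral_const_mul]
    congr 1
    exact integral_congr_ae (Filter.Eventually.of_forall fun ω => by ring)
  -- positivity from the Gram matrix
  have hpos : 0 < ∑ k, ∑ l, v k * v l * ∫ ω, W ω * Δ ω * X ω k * X ω l ∂P := by
    have h := hGram.dotProduct_mulVec_pos hv0
    have hd : (star v ⬝ᵥ (Matrix.of fun k l => ∫ ω, W ω * Δ ω * X ω k * X ω l ∂P) *ᵥ v)
        = ∑ k, ∑ l, v k * v l * ∫ ω, W ω * Δ ω * X ω k * X ω l ∂P := by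
      simp only [dotProduct, mulVec, Matrix.of_apply, star_trivial, Finset.mul_sum]
      exact Finset.sum_congr rfl fun k _ =>
        Finset.sum_congr rfl fun l _ => by ring
    rw [hd] at h
    exact h
  -- assemble
  have hdecomp : ∫ ω, W ω * Δ ω * (Y ω - b ⬝ᵥ X ω) ^ 2 ∂P
      = (∫ ω, W ω * Δ ω * (Y ω - β ⬝ᵥ X ω) ^ 2 ∂P)
        + (∫ ω, 2 * (W ω * Δ ω * (ε ω * (v ⬝ᵥ X ω))) ∂P)
        + ∫ ω, W ω * Δ ω * (v ⬝ᵥ X ω) ^ 2 ∂P := by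
    have h1 : (fun ω => W ω * Δ ω * (Y ω - b ⬝ᵥ X ω) ^ 2)
        = fun ω => (W ω * Δ ω * (Y ω - β ⬝ᵥ X ω) ^ 2
            + 2 * (W ω * Δ ω * (ε ω * (v ⬝ᵥ X ω))))
          + W ω * Δ ω * (v ⬝ᵥ X ω) ^ 2 := by
      funext ω
      have hb1 : Y ω - b ⬝ᵥ X ω = ε ω + v ⬝ᵥ X ω := by rw [← hbeq]; exact hres v ω
      rw [hb1, hres0 ω]; ring
    have hint1 : Integrable (fun ω => W ω * Δ ω * (Y ω - β ⬝ᵥ X ω) ^ 2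
        + 2 * (W ω * Δ ω * (ε ω * (v ⬝ᵥ X ω)))) P :=
      (hint β).add ((hc_int v).const_mul 2)
    rw [h1, integral_add hint1 (hq_int v),
      integral_add (hint β) ((hc_int v).const_mul 2 :
        Integrable (fun ω => 2 * (W ω * Δ ω * (ε ω * (v ⬝ᵥ X ω)))) P)]
  rw [hdecomp, integral_const_mul, hcross, hquad]
  linarith [hpos]
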